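/- The matching produced by the doctor-proposing deferred acceptance algorithm in a two-sided matching market with responsive hospital preferences is stable: it is individually rational and admits no blocking pair. -/

import Mathlib

open Finset

variable {D H : Type*} [Fintype D] [DecidableEq D] [Fintype H] [DecidableEq H]

/-- The hospital doctor `d` proposes to, given the set `A` of (doctor, hospital)
pairs `(d, h)` such that `h` has already rejected `d`.  Doctor preferences are
given by `pref d`, the list of `d`'s acceptable hospitals in order of strict
preference. -/
def propose (pref : D → List H) (A : Finset (D × H)) (d : D) : Option H :=
  (pref d).find? (fun h => decide ((d, h) ∉ A))

/-- The set of doctors currently applying to hospital `h`. -/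
def proposers (pref : D → List H) (A : Finset (D × H)) (h : H) : Finset D :=
  univ.filter (fun d => propose pref A d = some h)

/-- The (up to) `n` best doctors of `S` according to hospital `h`'s strict
priority order (lower `prio h` value means more preferred). -/
def topN (prio : H → D → ℕ) (h : H) (n : ℕ) (S : Finset D) : Finset D :=
  S.filter (fun d => (S.filter (fun d' => prio h d' < prio h d)).card < n)

/-- The doctors tentatively kept by hospital `h`: the best acceptable applicants,
up to the capacity `q h`. -/
def kept (pref : D → List H) (prio : H → D → ℕ) (acc : H → Finset D) (q : H → ℕ)
    (A : Finset (D × H)) (h : H) : Finset D :=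
  topN prio h (q h) (proposers pref A h ∩ acc h)

/-- One round of the doctor-proposing deferred acceptance algorithm, recorded via
the set of rejections so far: every applicant not tentatively kept is rejected. -/
def daStep (pref : D → List H) (prio : H → D → ℕ) (acc : H → Finset D) (q : H → ℕ)
    (A : Finset (D × H)) : Finset (D × H) :=
  A ∪ univ.filter (fun p : D × H =>
    propose pref A p.1 = some p.2 ∧ p.1 ∉ kept pref prio acc q A p.2)

/-- The outcome of the doctor-proposing deferred acceptance algorithm. -/
def daMatch (pref : D → List H) (prio : H → D → ℕ) (acc : H → Finset D) (q : H → ℕ)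
    (d : D) : Option H :=
  propose pref ((daStep pref prio acc q)^[Fintype.card D * Fintype.card H + 1] ∅) d

/-- The set of doctors matched to hospital `h` under matching `μ`. -/
def matchedSet (μ : D → Option H) (h : H) : Finset D :=
  univ.filter (fun d => μ d = some h)

/-- The rank of an outcome in doctor `d`'s preference list (smaller is better;
being unmatched ranks just below the least preferred acceptable hospital). -/
def rankOf (pref : D → List H) (d : D) : Option H → ℕ
  | none => (pref d).length
  | some h => (pref d).idxOf h

/-- Doctor `d` strictly prefers hospital `h` to outcome `o`. -/
def DPrefers (pref : D → List H) (d : D) (h : H) (o : Option H) : Prop :=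
  h ∈ pref d ∧ rankOf pref d (some h) < rankOf pref d o

/-- Individual rationality: nobody is matched with an unacceptable partner. -/
def IndivRat (pref : D → List H) (acc : H → Finset D) (μ : D → Option H) : Prop :=
  ∀ d h, μ d = some h → h ∈ pref d ∧ d ∈ acc h

/-- `(d, h)` is a blocking pair of `μ`. -/
def Blocks (pref : D → List H) (prio : H → D → ℕ) (acc : H → Finset D) (q : H → ℕ)
    (μ : D → Option H) (d : D) (h : H) : Prop :=
  DPrefers pref d h (μ d) ∧
    (((matchedSet μ h).card < q h ∧ d ∈ acc h) ∨
      ∃ d' ∈ matchedSet μ h, prio h d < prio h d')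

/-- Stability: individual rationality, capacities respected, and no blocking pair. -/
def IsStable (pref : D → List H) (prio : H → D → ℕ) (acc : H → Finset D) (q : H → ℕ)
    (μ : D → Option H) : Prop :=
  IndivRat pref acc μ ∧ (∀ h, (matchedSet μ h).card ≤ q h) ∧
    ∀ d h, ¬ Blocks pref prio acc q μ d h

set_option linter.unusedSectionVars false

section AuxLemmas

lemma list_find?_mono {α : Type*} {p p' : α → Bool} {l : List α} {b : α}
    (hpp : ∀ x, p' x = true → p x = true) (hb : p' b = true)
    (h : l.find? p = some b) : l.find? p' = some b := by
  induction l with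
  | nil => simp at h
  | cons a t ih =>
    by_cases hpa : p a = true
    · rw [List.find?_cons_of_pos hpa] at h
      injection h with h; subst h
      rw [List.find?_cons_of_pos hb]
    · have hpa' : ¬ p' a = true := fun hx => hpa (hpp a hx)
      rw [List.find?_cons_of_neg (by simpa using hpa)] at h
      rw [List.find?_cons_of_neg (by simpa using hpa')]
      exact ih h

lemma list_find?_earlier {α : Type*} [DecidableEq α] {p : α → Bool} {l : List α} {b a : α}
    (h : l.find? p = some b) (ha : a ∈ l) (hab : l.idxOf a < l.idxOf b) :
    ¬ p a = true := by
  induction l with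
  | nil => simp at ha
  | cons c t ih =>
    by_cases hpc : p c = true
    · rw [List.find?_cons_of_pos hpc] at h
      injection h with h; subst h
      simp [List.idxOf_cons_self] at hab
    · rw [List.find?_cons_of_neg (by simpa using hpc)] at h
      by_cases hac : a = c
      · subst hac; simpa using hpc
      · have hbc : b ≠ c := by
          rintro rfl; exact hpc (List.find?_some h)
        have hat : a ∈ t := by
          rcases List.mem_cons.mp ha with h' | h'
          · exact absurd h' hac
          · exact h'
        rw [List.idxOf_cons_ne _ (Ne.symm hac), List.idxOf_cons_ne _ (Ne.symm hbc)] at hab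
        exact ih h hat (Nat.lt_of_succ_lt_succ hab)

lemma topN_subset (prio : H → D → ℕ) (h : H) (n : ℕ) (S : Finset D) :
    topN prio h n S ⊆ S := filter_subset _ _

lemma topN_card (prio : H → D → ℕ) (h : H) (hinj : Function.Injective (prio h))
    (n : ℕ) (S : Finset D) : (topN prio h n S).card = min n S.card := by
  induction S using Finset.strongInduction with
  | _ S ih =>
    by_cases hle : S.card ≤ n
    · have : topN prio h n S = S := by
        apply Finset.filter_true_of_mem
        intro d hd
        have hsub : S.filter (fun d' => prio h d' < prio h d) ⊆ S.erase d := by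
          intro x hx
          rw [mem_filter] at hx
          exact mem_erase.mpr ⟨fun he => by simp [he] at hx, hx.1⟩
        calc (S.filter (fun d' => prio h d' < prio h d)).card
            ≤ (S.erase d).card := card_le_card hsub
          _ = S.card - 1 := card_erase_of_mem hd
          _ < n := by
              have : 1 ≤ S.card := card_pos.mpr ⟨d, hd⟩
              omega
      rw [this, min_eq_right hle]
    · push_neg at hle
      have hne : S.Nonempty := card_pos.mp (by omega)
      obtain ⟨m, hm, hmax⟩ := S.exists_max_image (prio h) hne
      have hlt : ∀ x ∈ S, x ≠ m → prio h x < prio h m := by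
        intro x hx hxm
        exact lt_of_le_of_ne (hmax x hx) (fun he => hxm (hinj he))
      have cntm : S.filter (fun y => prio h y < prio h m) = S.erase m := by
        ext y
        simp only [mem_filter, mem_erase]
        constructor
        · rintro ⟨hy, hlt'⟩
          exact ⟨fun he => by simp [he] at hlt', hy⟩
        · rintro ⟨hne', hy⟩
          exact ⟨hy, hlt y hy hne'⟩
      have hcnteq : ∀ x ∈ S, (S.erase m).filter (fun d' => prio h d' < prio h x)
          = S.filter (fun d' => prio h d' < prio h x) := by
        intro x hx
        rw [Finset.filter_erase]
        apply Finset.erase_eq_of_notMem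
        intro hmem
        rw [mem_filter] at hmem
        exact absurd (hmax x hx) (not_le.mpr hmem.2)
      have key : topN prio h n S = topN prio h n (S.erase m) := by
        ext x
        simp only [topN, mem_filter, mem_erase]
        constructor
        · rintro ⟨hx, hcnt⟩
          have hxm : x ≠ m := by
            rintro rfl
            rw [cntm, card_erase_of_mem hm] at hcnt
            omega
          exact ⟨⟨hxm, hx⟩, by rw [hcnteq x hx]; exact hcnt⟩
        · rintro ⟨⟨hxm, hx⟩, hcnt⟩
          exact ⟨hx, by rw [hcnteq x hx] at hcnt; exact hcnt⟩
      rw [key, ih (S.erase m) (Finset.erase_ssubset hm), card_erase_of_mem hm]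
      omega

lemma topN_better (prio : H → D → ℕ) (h : H) (hinj : Function.Injective (prio h))
    {n : ℕ} {S : Finset D} {d : D}
    (hcnt : n ≤ (S.filter (fun d' => prio h d' < prio h d)).card) :
    ∀ x ∈ topN prio h n S, prio h x < prio h d := by
  intro x hx
  rw [topN, mem_filter] at hx
  rcases lt_trichotomy (prio h x) (prio h d) with h1 | h1 | h1
  · exact h1
  · exact absurd hx.2 (by rw [hinj h1]; omega)
  · have hsub : S.filter (fun d' => prio h d' < prio h d)
        ⊆ S.filter (fun d' => prio h d' < prio h x) := by
      intro y hy
      rw [mem_filter] at *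
      exact ⟨hy.1, by omega⟩
    have := card_le_card hsub
    omega

lemma topN_full_better (prio : H → D → ℕ) (h : H) (hinj : Function.Injective (prio h))
    {n : ℕ} {S W : Finset D} {d : D} (hWS : W ⊆ S) (hW : n ≤ W.card)
    (hWd : ∀ w ∈ W, prio h w < prio h d) :
    (topN prio h n S).card = n ∧ ∀ x ∈ topN prio h n S, prio h x < prio h d := by
  have hSn : n ≤ S.card := le_trans hW (card_le_card hWS)
  constructor
  · rw [topN_card prio h hinj n S]; omega
  · apply topN_better prio h hinj
    calc n ≤ W.card := hW
      _ ≤ (S.filter (fun d' => prio h d' < prio h d)).card := by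
          apply card_le_card
          intro w hw
          exact mem_filter.mpr ⟨hWS hw, hWd w hw⟩

lemma propose_not_mem {pref : D → List H} {A : Finset (D × H)} {d : D} {h : H}
    (hp : propose pref A d = some h) : (d, h) ∉ A := by
  have := List.find?_some hp
  simpa using this

lemma propose_mem_pref {pref : D → List H} {A : Finset (D × H)} {d : D} {h : H}
    (hp : propose pref A d = some h) : h ∈ pref d :=
  List.mem_of_find?_eq_some hp

lemma propose_mono {pref : D → List H} {A A' : Finset (D × H)} {d : D} {h : H}
    (hAA : A ⊆ A') (hnm : (d, h) ∉ A') (hp : propose pref A d = some h) :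
    propose pref A' d = some h := by
  apply list_find?_mono (p := fun h' => decide ((d, h') ∉ A)) _ (by simpa using hnm) hp
  intro x hx
  simp only [decide_eq_true_eq] at *
  exact fun hmem => hx (hAA hmem)

lemma kept_subset (pref : D → List H) (prio : H → D → ℕ) (acc : H → Finset D) (q : H → ℕ)
    (A : Finset (D × H)) (h : H) :
    kept pref prio acc q A h ⊆ proposers pref A h ∩ acc h :=
  topN_subset _ _ _ _

lemma subset_daStep (pref : D → List H) (prio : H → D → ℕ) (acc : H → Finset D) (q : H → ℕ)
    (A : Finset (D × H)) : A ⊆ daStep pref prio acc q A :=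
  Finset.subset_union_left

lemma kept_subset_next (pref : D → List H) (prio : H → D → ℕ) (acc : H → Finset D)
    (q : H → ℕ) (A : Finset (D × H)) (h : H) :
    kept pref prio acc q A h ⊆
      proposers pref (daStep pref prio acc q A) h ∩ acc h := by
  intro w hw
  have hw' := kept_subset pref prio acc q A h hw
  rw [mem_inter, proposers, mem_filter] at hw'
  have hp : propose pref A w = some h := hw'.1.2
  have hnm : (w, h) ∉ daStep pref prio acc q A := by
    rw [daStep, Finset.mem_union]
    rintro (hmem | hmem)
    · exact propose_not_mem hp hmem
    · rw [mem_filter] at hmem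
      exact hmem.2.2 hw
  rw [mem_inter, proposers, mem_filter]
  exact ⟨⟨mem_univ _, propose_mono (subset_daStep pref prio acc q A) hnm hp⟩, hw'.2⟩

/-- The key invariant: once `(d, h)` is a recorded rejection and `d` is acceptable
to `h`, hospital `h` is full with doctors it strictly prefers to `d`. -/
def DAInv (pref : D → List H) (prio : H → D → ℕ) (acc : H → Finset D) (q : H → ℕ)
    (A : Finset (D × H)) : Prop :=
  ∀ d h, (d, h) ∈ A → d ∈ acc h →
    (kept pref prio acc q A h).card = q h ∧
      ∀ d' ∈ kept pref prio acc q A h, prio h d' < prio h d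

lemma inv_step (pref : D → List H) (prio : H → D → ℕ) (acc : H → Finset D) (q : H → ℕ)
    (hinj : ∀ h, Function.Injective (prio h)) (A : Finset (D × H))
    (hInv : DAInv pref prio acc q A) : DAInv pref prio acc q (daStep pref prio acc q A) := by
  intro d h hdh hacc
  set A' := daStep pref prio acc q A with hA'
  -- d is not among the current proposers to h
  have hdS' : d ∉ proposers pref A' h ∩ acc h := by
    intro hmem
    rw [mem_inter, proposers, mem_filter] at hmem
    exact propose_not_mem hmem.1.2 hdh
  -- obtain the witness set W = kept A h, full and all better than d
  have hW : (kept pref prio acc q A h).card = q h ∧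
      ∀ w ∈ kept pref prio acc q A h, prio h w < prio h d := by
    rw [hA', daStep, Finset.mem_union] at hdh
    rcases hdh with hold | hnew
    · exact hInv d h hold hacc
    · rw [mem_filter] at hnew
      obtain ⟨-, hp, hnk⟩ := hnew
      have hdS : d ∈ proposers pref A h ∩ acc h := by
        rw [mem_inter, proposers, mem_filter]
        exact ⟨⟨mem_univ _, hp⟩, hacc⟩
      have hcnt : q h ≤ ((proposers pref A h ∩ acc h).filter
          (fun d' => prio h d' < prio h d)).card := by
        by_contra hc
        push_neg at hc
        exact hnk (mem_filter.mpr ⟨hdS, hc⟩)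
      constructor
      · rw [kept, topN_card prio h (hinj h)]
        have := card_le_card (filter_subset
          (fun d' => prio h d' < prio h d) (proposers pref A h ∩ acc h))
        omega
      · exact topN_better prio h (hinj h) hcnt
  -- transport to the next stage
  have hWS : kept pref prio acc q A h ⊆ proposers pref A' h ∩ acc h :=
    kept_subset_next pref prio acc q A h
  have := topN_full_better prio h (hinj h) hWS (le_of_eq hW.1.symm) hW.2
  refine ⟨this.1, fun x hx => ?_⟩
  rcases lt_trichotomy (prio h x) (prio h d) with h1 | h1 | h1
  · exact h1
  · exact absurd ((hinj h) h1) (fun he => hdS' (he ▸ topN_subset _ _ _ _ hx))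
  · exact absurd h1 (not_lt.mpr (le_of_lt (this.2 x hx)))

end AuxLemmas

/-- the matching produced by the doctor-proposing deferred acceptance
algorithm (with responsive hospital preferences, encoded by a strict priority
`prio h` over doctors, acceptable sets `acc h`, and capacities `q h`) is stable:
individually rational and with no blocking pair. -/
theorem da_stable (pref : D → List H) (prio : H → D → ℕ) (acc : H → Finset D)
    (q : H → ℕ) (hinj : ∀ h, Function.Injective (prio h))
    (hnd : ∀ d, (pref d).Nodup)
    (hcons : ∀ h d d', prio h d < prio h d' → d' ∈ acc h → d ∈ acc h) :
    IsStable pref prio acc q (daMatch pref prio acc q) := by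
  classical
  set g := daStep pref prio acc q with hg
  set N := Fintype.card D * Fintype.card H + 1 with hN
  set A := g^[N] (∅ : Finset (D × H)) with hA
  have hchain : ∀ n, g^[n + 1] (∅ : Finset (D × H)) = g^[n] ∅ ∨ n ≤ (g^[n] (∅ : Finset (D × H))).card := by
    intro n
    induction n with
    | zero => exact Or.inr (Nat.zero_le _)
    | succ n ih =>
      by_cases heq : g^[n + 1] (∅ : Finset (D × H)) = g^[n] ∅
      · left
        rw [Function.iterate_succ_apply' g (n + 1) ∅, heq, ← Function.iterate_succ_apply' g n ∅]
        exact heq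
      · right
        rcases ih with h' | h'
        · exact absurd h' heq
        · have hsub : g^[n] (∅ : Finset (D × H)) ⊆ g^[n + 1] ∅ := by
            rw [Function.iterate_succ_apply']
            exact subset_daStep pref prio acc q _
          have : (g^[n] (∅ : Finset (D × H))).card < (g^[n + 1] (∅ : Finset (D × H))).card :=
            Finset.card_lt_card (lt_of_le_of_ne hsub (fun he => heq he.symm))
          omega
  have hfix : g A = A := by
    rcases hchain N with h' | h'
    · rw [hA, ← Function.iterate_succ_apply' g N ∅]
      exact h'
    · exfalso
      have h1 : (g^[N] (∅ : Finset (D × H))).card ≤ Fintype.card (D × H) := by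
        rw [← Finset.card_univ]
        exact Finset.card_le_univ _
      rw [Fintype.card_prod] at h1
      omega
  have hInvA : DAInv pref prio acc q A := by
    have : ∀ n, DAInv pref prio acc q (g^[n] ∅) := by
      intro n
      induction n with
      | zero => intro d h hdh _; simp at hdh
      | succ n ih =>
        rw [Function.iterate_succ_apply']
        exact inv_step pref prio acc q hinj _ ih
    exact this N
  have hμ : ∀ d, daMatch pref prio acc q d = propose pref A d := fun d => rfl
  have hpk : ∀ h, proposers pref A h ⊆ kept pref prio acc q A h := by
    intro h d hd
    rw [proposers, mem_filter] at hd
    by_contra hnk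
    have hmem : (d, h) ∈ g A := by
      rw [hg, daStep, Finset.mem_union]
      right
      rw [mem_filter]
      exact ⟨mem_univ _, hd.2, hnk⟩
    rw [hfix] at hmem
    exact propose_not_mem hd.2 hmem
  have hmk : ∀ h, matchedSet (daMatch pref prio acc q) h = kept pref prio acc q A h := by
    intro h
    apply Finset.Subset.antisymm
    · intro d hd
      rw [matchedSet, mem_filter] at hd
      apply hpk h
      rw [proposers, mem_filter]
      exact ⟨mem_univ _, by rw [← hμ d]; exact hd.2⟩
    · intro d hd
      have hd' := kept_subset pref prio acc q A h hd
      rw [mem_inter, proposers, mem_filter] at hd'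
      rw [matchedSet, mem_filter]
      exact ⟨mem_univ _, by rw [hμ d]; exact hd'.1.2⟩
  refine ⟨?_, ?_, ?_⟩
  · -- individual rationality
    intro d h hdm
    have hp : propose pref A d = some h := by rw [← hμ d]; exact hdm
    refine ⟨propose_mem_pref hp, ?_⟩
    have hk : d ∈ kept pref prio acc q A h := by
      apply hpk h
      rw [proposers, mem_filter]
      exact ⟨mem_univ _, hp⟩
    exact (mem_inter.mp (kept_subset pref prio acc q A h hk)).2
  · -- capacities
    intro h
    rw [hmk h, kept, topN_card prio h (hinj h)]
    exact min_le_left _ _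
  · -- no blocking pair
    rintro d h ⟨⟨hmem, hrank⟩, hblock⟩
    have hdh : (d, h) ∈ A := by
      by_contra hnm
      have hpA : (fun h' => decide ((d, h') ∉ A)) h = true := by simpa using hnm
      cases ho : daMatch pref prio acc q d with
      | none =>
        have hpn : propose pref A d = none := by rw [← hμ d]; exact ho
        exact List.find?_eq_none.mp hpn h hmem hpA
      | some h0 =>
        have hp0 : propose pref A d = some h0 := by rw [← hμ d]; exact ho
        rw [ho] at hrank
        have hidx : (pref d).idxOf h < (pref d).idxOf h0 := hrank
        exact list_find?_earlier hp0 hmem hidx hpA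
    have hacc : d ∈ acc h := by
      rcases hblock with ⟨-, hacc⟩ | ⟨d', hd', hlt⟩
      · exact hacc
      · rw [hmk h] at hd'
        exact hcons h d d' hlt
          (mem_inter.mp (kept_subset pref prio acc q A h hd')).2
    obtain ⟨hcard, hbetter⟩ := hInvA d h hdh hacc
    rcases hblock with ⟨hlt, -⟩ | ⟨d', hd', hlt⟩
    · rw [hmk h, hcard] at hlt
      exact lt_irrefl _ hlt
    · rw [hmk h] at hd'
      exact absurd (hbetter d' hd') (not_lt.mpr (le_of_lt hlt))
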